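/- If f ∈ 𝔇_α is cyclic for the pair of shift operators (S1, S2), then for every fixed w in the unit disk, the slice function f_w(z) = f(z, w) is cyclic in the one-variable Dirichlet-type space D_α. -/

import Mathlib

open scoped ENNReal NNReal Classical
open Filter

/-- Weight `(k+1)^α` as an extended nonnegative real. -/
noncomputable def wt (α : ℝ) (k : ℕ) : ℝ≥0∞ := ((k : ℝ≥0∞) + 1) ^ α


lemma wt_eq (α : ℝ) (k : ℕ) : wt α k = ((((k : ℝ≥0) + 1) ^ α : ℝ≥0) : ℝ≥0∞) := by
  have h : ((k : ℝ≥0∞) + 1) = (((k : ℝ≥0) + 1 : ℝ≥0) : ℝ≥0∞) := by norm_cast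
  rw [wt, h, ← ENNReal.coe_rpow_of_ne_zero (by positivity)]

lemma wt_ne_zero (α : ℝ) (k : ℕ) : wt α k ≠ 0 := by
  rw [wt_eq]
  exact_mod_cast (NNReal.rpow_pos (by positivity)).ne'

lemma wt_ne_top (α : ℝ) (k : ℕ) : wt α k ≠ ⊤ := by
  rw [wt_eq]; exact ENNReal.coe_ne_top

lemma cs_tsum (b c : ℕ → ℝ≥0∞) :
    (∑' l, b l * c l) ^ 2 ≤ (∑' l, b l ^ 2) * (∑' l, c l ^ 2) := by
  have h2 : Real.HolderConjugate 2 2 := Real.HolderConjugate.two_two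
  have H := ENNReal.lintegral_mul_le_Lp_mul_Lq MeasureTheory.Measure.count h2
    (Measurable.of_discrete (f := b)).aemeasurable (Measurable.of_discrete (f := c)).aemeasurable
  simp only [Pi.mul_apply, MeasureTheory.lintegral_count] at H
  have hsq : ∀ x : ℝ≥0∞, x ^ (2 : ℝ) = x ^ 2 := by
    intro x
    rw [show ((2:ℝ)) = ((2:ℕ):ℝ) by norm_num, ENNReal.rpow_natCast]
  have hhalf : ∀ x : ℝ≥0∞, (x ^ ((1:ℝ)/2)) ^ 2 = x := by
    intro x
    rw [← hsq, ← ENNReal.rpow_mul]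
    norm_num
  calc (∑' l, b l * c l) ^ 2
      ≤ ((∑' l, b l ^ (2:ℝ)) ^ ((1:ℝ)/2) * (∑' l, c l ^ (2:ℝ)) ^ ((1:ℝ)/2)) ^ 2 := by
        gcongr
    _ = (∑' l, b l ^ 2) * (∑' l, c l ^ 2) := by
        rw [mul_pow, hhalf, hhalf]
        simp only [hsq]

/-- Squared norm of the Dirichlet-type space `𝔇_α` of the bidisk, at the level of
Taylor coefficients `a k l`. -/
noncomputable def Dnorm2 (α : ℝ) (a : ℕ → ℕ → ℂ) : ℝ≥0∞ :=
  ∑' p : ℕ × ℕ, wt α p.1 * wt α p.2 * ((‖a p.1 p.2‖₊ : ℝ≥0∞)) ^ 2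

/-- Squared norm of the one-variable Dirichlet-type space `D_α`. -/
noncomputable def dnorm2 (α : ℝ) (a : ℕ → ℂ) : ℝ≥0∞ :=
  ∑' k : ℕ, wt α k * ((‖a k‖₊ : ℝ≥0∞)) ^ 2

/-- Cauchy product (coefficients of the product of two power series in two variables). -/
noncomputable def conv2 (p a : ℕ → ℕ → ℂ) : ℕ → ℕ → ℂ := fun k l =>
  ∑ i ∈ Finset.range (k + 1), ∑ j ∈ Finset.range (l + 1), p i j * a (k - i) (l - j)

/-- Cauchy product in one variable. -/
noncomputable def conv1 (p a : ℕ → ℂ) : ℕ → ℂ := fun k =>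
  ∑ i ∈ Finset.range (k + 1), p i * a (k - i)

/-- Coefficients of the constant function `1` in two variables. -/
def one2 : ℕ → ℕ → ℂ := fun k l => if k = 0 ∧ l = 0 then 1 else 0

/-- Coefficients of the constant function `1` in one variable. -/
def one1 : ℕ → ℂ := fun k => if k = 0 then 1 else 0

/-- `p` is (the coefficient sequence of) a polynomial in `𝔓_n`. -/
def IsPoly2 (n : ℕ) (p : ℕ → ℕ → ℂ) : Prop := ∀ k l, n < k ∨ n < l → p k l = 0

/-- `p` is a one-variable polynomial of degree at most `n`. -/
def IsPoly1 (n : ℕ) (p : ℕ → ℂ) : Prop := ∀ k, n < k → p k = 0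

/-- Cyclicity of `a` in `𝔇_α`: some sequence of polynomials `p n` has `‖p n · f - 1‖_α → 0`. -/
def Cyclic2 (α : ℝ) (a : ℕ → ℕ → ℂ) : Prop :=
  ∃ p : ℕ → ℕ → ℕ → ℂ, (∀ n, ∃ m, IsPoly2 m (p n)) ∧
    Tendsto (fun n => Dnorm2 α (fun k l => conv2 (p n) a k l - one2 k l)) atTop (nhds 0)

/-- Cyclicity of `a` in the one-variable space `D_α`. -/
def Cyclic1 (α : ℝ) (a : ℕ → ℂ) : Prop :=
  ∃ p : ℕ → ℕ → ℂ, (∀ n, ∃ m, IsPoly1 m (p n)) ∧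
    Tendsto (fun n => dnorm2 α (fun k => conv1 (p n) a k - one1 k)) atTop (nhds 0)

/-- Squared distance `dist²_{𝔇_α}(1, f · 𝔓_n)`. -/
noncomputable def distP2 (α : ℝ) (n : ℕ) (a : ℕ → ℕ → ℂ) : ℝ≥0∞ :=
  ⨅ (p : ℕ → ℕ → ℂ) (_ : IsPoly2 n p), Dnorm2 α (fun k l => conv2 p a k l - one2 k l)


noncomputable def Cw (α : ℝ) (w : ℂ) : ℝ≥0∞ :=
  ∑' l : ℕ, (wt α l)⁻¹ * ((‖w‖₊ : ℝ≥0∞) ^ l) ^ 2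

lemma aux_summable (M : ℕ) {s : ℝ≥0} (hs1 : (s : ℝ) < 1) :
    Summable (fun l : ℕ => (((l : ℝ≥0) + 1) ^ M * s ^ l : ℝ≥0)) := by
  rw [← NNReal.summable_coe]
  push_cast
  by_cases h0 : (s : ℝ) = 0
  · apply summable_of_ne_finset_zero (s := {0})
    intro l hl
    simp only [Finset.mem_singleton] at hl
    rw [h0, zero_pow hl, mul_zero]
  · have h := summable_pow_mul_geometric_of_norm_lt_one (R := ℝ) M
      (r := (s : ℝ)) (by rw [Real.norm_eq_abs, abs_of_nonneg s.coe_nonneg]; exact hs1)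
    have h1 : Summable (fun n : ℕ => ((n : ℝ) + 1) ^ M * (s : ℝ) ^ (n + 1)) := by
      have := (summable_nat_add_iff (f := fun n : ℕ => (n : ℝ) ^ M * (s : ℝ) ^ n) 1).2 h
      refine this.congr fun n => ?_
      push_cast
      ring
    refine ((h1.mul_left (s : ℝ)⁻¹).congr ?_)
    intro l
    rw [pow_succ,
      show (s:ℝ)⁻¹ * (((l:ℝ)+1)^M * ((s:ℝ)^l * (s:ℝ))) = (((l:ℝ)+1)^M * (s:ℝ)^l) * ((s:ℝ)⁻¹ * (s:ℝ)) by ring,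
      inv_mul_cancel₀ h0, mul_one]

lemma Cw_ne_top (α : ℝ) {w : ℂ} (hw : ‖w‖ < 1) : Cw α w ≠ ⊤ := by
  obtain ⟨M, hM⟩ : ∃ M : ℕ, |α| ≤ (M : ℝ) := ⟨⌈|α|⌉₊, Nat.le_ceil _⟩
  obtain ⟨s, hs⟩ : ∃ s : ℝ≥0, s = ‖w‖₊ ^ 2 := ⟨_, rfl⟩
  have hs1 : (s : ℝ) < 1 := by
    have h1 : (s : ℝ) = ‖w‖ ^ 2 := by rw [hs]; push_cast; rfl
    nlinarith [norm_nonneg w]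
  have hbound : ∀ l : ℕ, (wt α l)⁻¹ * ((‖w‖₊ : ℝ≥0∞) ^ l) ^ 2
      ≤ ((((l : ℝ≥0) + 1) ^ M * s ^ l : ℝ≥0) : ℝ≥0∞) := by
    intro l
    have h1 : (wt α l)⁻¹ = ((l : ℝ≥0∞) + 1) ^ (-α) := by
      rw [wt, ← ENNReal.rpow_neg]
    have h2 : ((l : ℝ≥0∞) + 1) ^ (-α) ≤ ((l : ℝ≥0∞) + 1) ^ (M : ℝ) := by
      apply ENNReal.rpow_le_rpow_of_exponent_le (by simp)
      calc (-α) ≤ |α| := neg_le_abs α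
        _ ≤ (M : ℝ) := hM
    have h3 : ((l : ℝ≥0∞) + 1) ^ (M : ℝ) = ((((l : ℝ≥0) + 1) ^ M : ℝ≥0) : ℝ≥0∞) := by
      rw [ENNReal.rpow_natCast]
      norm_cast
    have h4 : ((‖w‖₊ : ℝ≥0∞) ^ l) ^ 2 = ((s ^ l : ℝ≥0) : ℝ≥0∞) := by
      rw [hs]
      push_cast
      rw [← pow_mul, ← pow_mul, mul_comm]
    rw [h1, h4, ENNReal.coe_mul]
    exact mul_le_mul_left (h3 ▸ h2) _
  have hsum : Summable (fun l : ℕ => (((l : ℝ≥0) + 1) ^ M * s ^ l : ℝ≥0)) :=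
    aux_summable M hs1
  exact ne_top_of_le_ne_top (ENNReal.tsum_coe_ne_top_iff_summable.2 hsum)
    (ENNReal.tsum_le_tsum hbound)

lemma my_enorm_tsum_le (f : ℕ → ℂ) :
    ((‖∑' l, f l‖₊ : ℝ≥0∞)) ≤ ∑' l, ((‖f l‖₊ : ℝ≥0∞)) := by
  by_cases h : Summable f
  · have hn : Summable (fun l => ‖f l‖₊) := by
      rw [← NNReal.summable_coe]
      exact (summable_norm_iff.2 h)
    rw [← ENNReal.coe_tsum hn]
    exact_mod_cast nnnorm_tsum_le hn
  · rw [tsum_eq_zero_of_not_summable h]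
    simp

lemma row_bound (α : ℝ) (g : ℕ → ℂ) (w : ℂ) :
    (∑' l, ((‖g l * w ^ l‖₊ : ℝ≥0∞))) ^ 2
      ≤ (∑' l, wt α l * ((‖g l‖₊ : ℝ≥0∞)) ^ 2) * Cw α w := by
  have hu : ∀ l, (wt α l) ^ ((1:ℝ)/2) * ((wt α l) ^ ((1:ℝ)/2))⁻¹ = 1 := fun l =>
    ENNReal.mul_inv_cancel
      (by simp [ENNReal.rpow_eq_zero_iff, wt_ne_zero α l, wt_ne_top α l])
      (by simp [ENNReal.rpow_eq_top_iff, wt_ne_zero α l, wt_ne_top α l])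
  have hsq : ∀ l, ((wt α l) ^ ((1:ℝ)/2)) ^ 2 = wt α l := by
    intro l
    rw [← ENNReal.rpow_natCast _ 2, ← ENNReal.rpow_mul]
    norm_num
  calc (∑' l, ((‖g l * w ^ l‖₊ : ℝ≥0∞))) ^ 2
      = (∑' l, ((wt α l) ^ ((1:ℝ)/2) * (‖g l‖₊ : ℝ≥0∞))
          * (((wt α l) ^ ((1:ℝ)/2))⁻¹ * (‖w‖₊ : ℝ≥0∞) ^ l)) ^ 2 := by
        congr 1
        apply tsum_congr
        intro l
        rw [show ∀ A B C D : ℝ≥0∞, (A * B) * (C * D) = (A * C) * (B * D) by intros; ring,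
          hu l, one_mul, nnnorm_mul, nnnorm_pow, ENNReal.coe_mul, ENNReal.coe_pow]
    _ ≤ (∑' l, ((wt α l) ^ ((1:ℝ)/2) * (‖g l‖₊ : ℝ≥0∞)) ^ 2)
          * (∑' l, (((wt α l) ^ ((1:ℝ)/2))⁻¹ * (‖w‖₊ : ℝ≥0∞) ^ l) ^ 2) :=
        cs_tsum _ _
    _ = (∑' l, wt α l * ((‖g l‖₊ : ℝ≥0∞)) ^ 2) * Cw α w := by
        congr 1
        · apply tsum_congr; intro l; rw [mul_pow, hsq]
        · apply tsum_congr; intro l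
          rw [mul_pow, ← ENNReal.inv_pow, hsq]

lemma Dnorm2_eq (α : ℝ) (g : ℕ → ℕ → ℂ) :
    Dnorm2 α g = ∑' k, wt α k * ∑' l, wt α l * ((‖g k l‖₊ : ℝ≥0∞)) ^ 2 := by
  rw [Dnorm2, ENNReal.tsum_prod (f := fun k l => wt α k * wt α l * ((‖g k l‖₊ : ℝ≥0∞)) ^ 2)]
  apply tsum_congr; intro k
  rw [← ENNReal.tsum_mul_left]
  apply tsum_congr; intro l
  ring

lemma slice_le (α : ℝ) (w : ℂ) (g : ℕ → ℕ → ℂ) :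
    dnorm2 α (fun k => ∑' l, g k l * w ^ l) ≤ Cw α w * Dnorm2 α g := by
  rw [Dnorm2_eq, dnorm2, ← ENNReal.tsum_mul_left]
  apply ENNReal.tsum_le_tsum
  intro k
  calc wt α k * ((‖∑' l, g k l * w ^ l‖₊ : ℝ≥0∞)) ^ 2
      ≤ wt α k * ((∑' l, wt α l * ((‖g k l‖₊ : ℝ≥0∞)) ^ 2) * Cw α w) := by
        gcongr
        exact le_trans (by gcongr; exact my_enorm_tsum_le _) (row_bound α (g k) w)
    _ = Cw α w * (wt α k * ∑' l, wt α l * ((‖g k l‖₊ : ℝ≥0∞)) ^ 2) := by ring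

lemma row_ne_top {α : ℝ} {a : ℕ → ℕ → ℂ} (hf : Dnorm2 α a ≠ ⊤) (k : ℕ) :
    (∑' l, wt α l * ((‖a k l‖₊ : ℝ≥0∞)) ^ 2) ≠ ⊤ := by
  intro htop
  apply hf
  rw [Dnorm2_eq]
  refine eq_top_iff.2 ?_
  calc (⊤ : ℝ≥0∞) = wt α k * ∑' l, wt α l * ((‖a k l‖₊ : ℝ≥0∞)) ^ 2 := by
        rw [htop, ENNReal.mul_top (wt_ne_zero α k)]
    _ ≤ _ := ENNReal.le_tsum k

lemma summable_slice {α : ℝ} {w : ℂ} (hw : ‖w‖ < 1) {g : ℕ → ℂ}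
    (hrow : (∑' l, wt α l * ((‖g l‖₊ : ℝ≥0∞)) ^ 2) ≠ ⊤) :
    Summable (fun l => g l * w ^ l) := by
  have hS : (∑' l, ((‖g l * w ^ l‖₊ : ℝ≥0∞))) ≠ ⊤ := by
    intro htop
    have := row_bound α g w
    rw [htop] at this
    rw [pow_two, ENNReal.top_mul_top] at this
    exact (ENNReal.mul_ne_top hrow (Cw_ne_top α hw)) (eq_top_iff.2 this)
  have : Summable (fun l => ‖g l * w ^ l‖₊) := ENNReal.tsum_coe_ne_top_iff_summable.1 hS
  exact Summable.of_nnnorm this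

lemma F_props (a : ℕ → ℕ → ℂ) (w : ℂ) {m : ℕ} (hm : Summable fun l => a m l * w ^ l)
    (c : ℂ) (j : ℕ) :
    Summable (fun l => if j ≤ l then c * a m (l - j) * w ^ l else 0) ∧
    (∑' l, (if j ≤ l then c * a m (l - j) * w ^ l else 0))
      = c * w ^ j * ∑' l, a m l * w ^ l := by
  set F : ℕ → ℂ := fun l => if j ≤ l then c * a m (l - j) * w ^ l else 0 with hF
  have hinj : Function.Injective (fun x : ℕ => x + j) := add_left_injective j
  have hsupp : ∀ x ∉ Set.range (fun x : ℕ => x + j), F x = 0 := by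
    intro x hx
    have : ¬ j ≤ x := by
      intro hjx
      exact hx ⟨x - j, by show x - j + j = x; omega⟩
    simp [hF, this]
  have hcomp : ∀ x : ℕ, F (x + j) = (c * w ^ j) * (a m x * w ^ x) := by
    intro x
    simp only [hF, if_pos (Nat.le_add_left j x), Nat.add_sub_cancel]
    rw [pow_add]
    ring
  have hsum : Summable (F ∘ fun x : ℕ => x + j) := by
    refine (hm.mul_left (c * w ^ j)).congr fun x => (hcomp x).symm
  constructor
  · exact (hinj.summable_iff hsupp).1 hsum
  · rw [← hinj.tsum_eq (Function.support_subset_iff'.2 hsupp)]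
    calc ∑' x, F (x + j) = ∑' x, (c * w ^ j) * (a m x * w ^ x) := tsum_congr hcomp
      _ = c * w ^ j * ∑' l, a m l * w ^ l := tsum_mul_left

lemma slice_conv (a : ℕ → ℕ → ℂ) (w : ℂ) (hsum : ∀ m, Summable fun l => a m l * w ^ l)
    {N : ℕ} {p : ℕ → ℕ → ℂ} (hp : IsPoly2 N p) (k : ℕ) :
    Summable (fun l => conv2 p a k l * w ^ l) ∧
    ∑' l, conv2 p a k l * w ^ l
      = conv1 (fun i => ∑' j, p i j * w ^ j) (fun m => ∑' l, a m l * w ^ l) k := by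
  set F : ℕ → ℕ → ℕ → ℂ :=
    fun i j l => if j ≤ l then p i j * a (k - i) (l - j) * w ^ l else 0 with hF
  have step1 : ∀ l, conv2 p a k l * w ^ l
      = ∑ i ∈ Finset.range (k + 1), ∑ j ∈ Finset.range (N + 1), F i j l := by
    intro l
    rw [conv2, Finset.sum_mul]
    apply Finset.sum_congr rfl
    intro i _
    rw [Finset.sum_mul]
    have e1 : ∑ j ∈ Finset.range (l + 1), p i j * a (k - i) (l - j) * w ^ l
        = ∑ j ∈ Finset.range (l + 1), F i j l := by
      apply Finset.sum_congr rfl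
      intro j hj
      rw [Finset.mem_range] at hj
      simp [hF, Nat.lt_succ_iff.1 hj]
    rw [e1]
    have hsub1 : Finset.range (l + 1) ⊆ Finset.range (max l N + 1) := by
      apply Finset.range_subset_range.2; omega
    have hsub2 : Finset.range (N + 1) ⊆ Finset.range (max l N + 1) := by
      apply Finset.range_subset_range.2; omega
    rw [Finset.sum_subset hsub1, Finset.sum_subset hsub2]
    · intro j _ hj
      rw [Finset.mem_range] at hj
      have : p i j = 0 := hp i j (Or.inr (by omega))
      simp [hF, this]
    · intro j _ hj
      rw [Finset.mem_range] at hj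
      have : ¬ j ≤ l := by omega
      simp [hF, this]
  have hFs : ∀ i j, Summable (F i j) := fun i j =>
    (F_props a w (hsum (k - i)) (p i j) j).1
  have hFt : ∀ i j, ∑' l, F i j l = p i j * w ^ j * ∑' l, a (k - i) l * w ^ l := fun i j =>
    (F_props a w (hsum (k - i)) (p i j) j).2
  have hsum2 : Summable (fun l => ∑ i ∈ Finset.range (k + 1),
      ∑ j ∈ Finset.range (N + 1), F i j l) := by
    apply summable_sum
    intro i _
    exact summable_sum fun j _ => hFs i j
  constructor
  · exact hsum2.congr fun l => (step1 l).symm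
  · rw [tsum_congr step1]
    rw [Summable.tsum_finsetSum (fun i _ => summable_sum fun j _ => hFs i j)]
    rw [conv1]
    apply Finset.sum_congr rfl
    intro i _
    rw [Summable.tsum_finsetSum (fun j _ => hFs i j)]
    have hq : (∑' j, p i j * w ^ j) = ∑ j ∈ Finset.range (N + 1), p i j * w ^ j := by
      apply tsum_eq_sum
      intro j hj
      rw [Finset.mem_range] at hj
      rw [hp i j (Or.inr (by omega)), zero_mul]
    rw [hq, Finset.sum_mul]
    apply Finset.sum_congr rfl
    intro j _
    rw [hFt i j]

lemma slice_one2 (w : ℂ) (k : ℕ) :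
    Summable (fun l => one2 k l * w ^ l) ∧ (∑' l, one2 k l * w ^ l) = one1 k := by
  have hz : ∀ l ∉ ({0} : Finset ℕ), one2 k l * w ^ l = 0 := by
    intro l hl
    simp only [Finset.mem_singleton] at hl
    simp [one2, hl]
  refine ⟨summable_of_ne_finset_zero hz, ?_⟩
  rw [tsum_eq_sum hz, Finset.sum_singleton]
  by_cases hk : k = 0 <;> simp [one2, one1, hk]

/-- slices of cyclic functions are cyclic. -/
theorem stmt3 (α : ℝ) (a : ℕ → ℕ → ℂ) (hf : Dnorm2 α a ≠ ⊤) (hc : Cyclic2 α a)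
    (w : ℂ) (hw : ‖w‖ < 1) :
    Cyclic1 α (fun k => ∑' l : ℕ, a k l * w ^ l) := by
  obtain ⟨p, hdeg, hten⟩ := hc
  choose N hN using hdeg
  have hsumrow : ∀ m, Summable fun l => a m l * w ^ l := fun m =>
    summable_slice hw (row_ne_top hf m)
  refine ⟨fun n i => ∑' j, p n i j * w ^ j, fun n => ⟨N n, ?_⟩, ?_⟩
  · intro i hi
    have hz : ∀ j : ℕ, p n i j * w ^ j = 0 := fun j => by
      rw [hN n i j (Or.inl hi), zero_mul]
    simp only [hz]
    exact tsum_zero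
  · have key : ∀ n, dnorm2 α (fun k => conv1 (fun i => ∑' j, p n i j * w ^ j)
        (fun m => ∑' l, a m l * w ^ l) k - one1 k)
        ≤ Cw α w * Dnorm2 α (fun k l => conv2 (p n) a k l - one2 k l) := by
      intro n
      have heq : (fun k => conv1 (fun i => ∑' j, p n i j * w ^ j)
            (fun m => ∑' l, a m l * w ^ l) k - one1 k)
          = fun k => ∑' l, (conv2 (p n) a k l - one2 k l) * w ^ l := by
        funext k
        obtain ⟨h1s, h1⟩ := slice_conv a w hsumrow (hN n) k
        obtain ⟨h2s, h2⟩ := slice_one2 w k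
        rw [← h1, ← h2, ← Summable.tsum_sub h1s h2s]
        apply tsum_congr; intro l; ring
      rw [heq]
      exact slice_le α w _
    have hlim : Tendsto (fun n => Cw α w *
        Dnorm2 α (fun k l => conv2 (p n) a k l - one2 k l)) atTop (nhds 0) := by
      have := ENNReal.Tendsto.const_mul (a := Cw α w) hten (Or.inr (Cw_ne_top α hw))
      simpa using this
    exact tendsto_of_tendsto_of_tendsto_of_le_of_le tendsto_const_nhds hlim
      (fun n => zero_le) key
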